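/- Let V ∈ ℂ[q₁,…,qₙ] be a homogeneous polynomial of degree k and let d ∈ ℂⁿ, d ≠ 0, be an isotropic Darboux point, i.e. d₁² + ⋯ + dₙ² = 0 and either V′(d) = d (proper normalized case) or V′(d) = 0 (improper case). Then the corresponding eigenvalue of the Hessian V″(d) (namely λ = k−1 in the proper case and λ = 0 in the improper case) is a multiple eigenvalue: it is a root of the characteristic polynomial of V″(d) of algebraic multiplicity at least two. -/

import Mathlib

open MvPolynomial

/-- The gradient of a multivariate polynomial, evaluated at a point. -/
noncomputable def grad {n : ℕ} (V : MvPolynomial (Fin n) ℂ) (d : Fin n → ℂ) : Fin n → ℂ :=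
  fun i => eval d (pderiv i V)

/-- The Hessian matrix of a multivariate polynomial, evaluated at a point. -/
noncomputable def hess {n : ℕ} (V : MvPolynomial (Fin n) ℂ) (d : Fin n → ℂ) :
    Matrix (Fin n) (Fin n) ℂ :=
  Matrix.of fun i j => eval d (pderiv i (pderiv j V))

open Matrix in
-- symmetry of second partials
lemma pderiv_comm' {n : ℕ} (i j : Fin n) (p : MvPolynomial (Fin n) ℂ) :
    pderiv i (pderiv j p) = pderiv j (pderiv i p) := by
  induction p using MvPolynomial.induction_on with
  | C a => simp
  | add p q hp hq => simp [hp, hq]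
  | mul_X p s h =>
      have h0 : ∀ a b : Fin n, pderiv a (pderiv b (X s : MvPolynomial (Fin n) ℂ)) = 0 := by
        intro a b
        rcases eq_or_ne s b with rfl | hb
        · simp
        · simp [pderiv_X_of_ne hb]
      simp only [pderiv_mul, map_add, h, h0, mul_zero, add_zero]
      ring


open Matrix in
-- Euler's identity
lemma euler_id {n k : ℕ} (V : MvPolynomial (Fin n) ℂ) (hV : V.IsHomogeneous k) :
    ∑ j, (X j : MvPolynomial (Fin n) ℂ) * pderiv j V = (k : ℂ) • V := by
  conv_lhs => rw [V.as_sum]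
  conv_rhs => rw [V.as_sum]
  simp only [map_sum, Finset.mul_sum, Finset.smul_sum]
  rw [Finset.sum_comm]
  refine Finset.sum_congr rfl fun s hs => ?_
  have hdeg : ∑ j, s j = k := by
    have h1 := hV (mem_support_iff.mp hs)
    rw [show (Finsupp.weight 1 : (Fin n →₀ ℕ) →+ ℕ) = Finsupp.weight (fun _ => 1) from rfl,
      ← Finsupp.degree_eq_weight_one] at h1
    rw [← h1, Finsupp.degree]
    exact (Finset.sum_subset (Finset.subset_univ _) (fun x _ hx =>
      Finsupp.notMem_support_iff.mp hx)).symm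
  have key : ∀ j : Fin n, (X j : MvPolynomial (Fin n) ℂ) * pderiv j (monomial s (coeff s V))
      = monomial s ((s j : ℂ) * coeff s V) := by
    intro j
    rw [pderiv_monomial]
    rcases Nat.eq_zero_or_pos (s j) with h0 | hpos
    · simp [h0]
    · have hidx : Finsupp.single j 1 + (s - Finsupp.single j 1) = s := by
        ext a
        simp only [Finsupp.add_apply, Finsupp.tsub_apply, Finsupp.single_apply]
        split_ifs with h
        · subst h; omega
        · omega
      rw [MvPolynomial.X, MvPolynomial.monomial_mul, one_mul, hidx, mul_comm]
  simp only [key, ← map_sum]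
  rw [MvPolynomial.smul_monomial]
  congr 1
  rw [← Finset.sum_mul, ← Nat.cast_sum, hdeg]
  simp [smul_eq_mul]

open Matrix in
lemma hess_symm {n : ℕ} (V : MvPolynomial (Fin n) ℂ) (d : Fin n → ℂ) :
    (hess V d)ᵀ = hess V d := by
  ext i j
  simp [hess, Matrix.transpose_apply, pderiv_comm' i j]

open Matrix in
lemma hess_mulVec {n k : ℕ} (V : MvPolynomial (Fin n) ℂ) (hV : V.IsHomogeneous k)
    (d : Fin n → ℂ) :
    (hess V d).mulVec d = ((k : ℂ) - 1) • grad V d := by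
  funext i
  have h2 : pderiv i (∑ j, (X j : MvPolynomial (Fin n) ℂ) * pderiv j V)
      = pderiv i V + ∑ j, (X j : MvPolynomial (Fin n) ℂ) * pderiv i (pderiv j V) := by
    rw [map_sum]
    simp only [pderiv_mul]
    rw [Finset.sum_add_distrib]
    congr 1
    rw [Finset.sum_eq_single i]
    · simp
    · intro j _ hj
      rw [pderiv_X_of_ne hj, zero_mul]
    · intro h; exact absurd (Finset.mem_univ i) h
  have h4 : pderiv i V + ∑ j, (X j : MvPolynomial (Fin n) ℂ) * pderiv i (pderiv j V)
      = (k : ℂ) • pderiv i V := by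
    rw [← h2, euler_id V hV, Derivation.map_smul]
  have h5 := congrArg (MvPolynomial.eval d) h4
  simp only [map_add, map_sum, _root_.map_mul, MvPolynomial.eval_X, smul_eq_mul, MvPolynomial.smul_eq_C_mul, MvPolynomial.eval_C] at h5
  show ∑ j, hess V d i j * d j = ((k : ℂ) - 1) * grad V d i
  have hij : ∀ j, hess V d i j = eval d (pderiv i (pderiv j V)) := fun j => rfl
  have hg : grad V d i = eval d (pderiv i V) := rfl
  simp only [hij, hg]
  have h6 : ∑ j, eval d (pderiv i (pderiv j V)) * d j
      = ∑ j, d j * eval d (pderiv i (pderiv j V)) := by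
    exact Finset.sum_congr rfl fun j _ => mul_comm _ _
  rw [h6]
  linear_combination h5

open Matrix in
lemma charpoly_conj' {n : ℕ} (P A : Matrix (Fin n) (Fin n) ℂ) (h : IsUnit P.det) :
    (P⁻¹ * A * P).charpoly = A.charpoly := by
  have hinv : P⁻¹ * P = 1 := Matrix.nonsing_inv_mul P h
  have hmat : charmatrix (P⁻¹ * A * P) =
      P⁻¹.map Polynomial.C * charmatrix A * P.map Polynomial.C := by
    show Matrix.scalar (Fin n) Polynomial.X - (Polynomial.C.mapMatrix (P⁻¹ * A * P)) = _
    have e1 : (Polynomial.C.mapMatrix (P⁻¹ * A * P) : Matrix (Fin n) (Fin n) (Polynomial ℂ))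
        = P⁻¹.map Polynomial.C * A.map Polynomial.C * P.map Polynomial.C := by
      simp [RingHom.mapMatrix_apply, Matrix.map_mul]
    rw [e1]
    show _ = P⁻¹.map Polynomial.C *
      (Matrix.scalar (Fin n) Polynomial.X - Polynomial.C.mapMatrix A) * P.map Polynomial.C
    rw [Matrix.mul_sub, Matrix.sub_mul]
    congr 1
    · have hc : P⁻¹.map Polynomial.C * Matrix.scalar (Fin n) Polynomial.X
          = Matrix.scalar (Fin n) Polynomial.X * P⁻¹.map Polynomial.C :=
        (Matrix.scalar_commute Polynomial.X (fun r => Commute.all _ r) _).symm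
      rw [hc, Matrix.mul_assoc, ← Matrix.map_mul, hinv]
      simp
  have hinv2 : P * P⁻¹ = 1 := Matrix.mul_nonsing_inv P h
  unfold Matrix.charpoly
  rw [hmat, Matrix.det_mul, Matrix.det_mul]
  rw [mul_comm, ← mul_assoc, ← Matrix.det_mul, ← Matrix.map_mul, hinv2]
  simp

open Matrix in
lemma single_sum {n : ℕ} (m0 : Fin n) (f : Fin n → ℂ) :
    ∑ m, f m * (Pi.single m0 1 : Fin n → ℂ) m = f m0 := by
  rw [Finset.sum_eq_single m0]
  · simp
  · intro b _ hb; simp [Pi.single_eq_of_ne hb]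
  · intro h; exact absurd (Finset.mem_univ m0) h

open Matrix in
lemma key_lemma {n : ℕ} (A : Matrix (Fin n) (Fin n) ℂ) (hA : Aᵀ = A)
    (d : Fin n → ℂ) (hd : d ≠ 0) (hiso : ∑ i, d i ^ 2 = 0) (lam : ℂ)
    (hAd : A.mulVec d = lam • d) :
    2 ≤ (A.charpoly).rootMultiplicity lam := by
  classical
  obtain ⟨i₀, hi₀⟩ : ∃ i, d i ≠ 0 := by
    by_contra hc
    push_neg at hc
    exact hd (funext fun i => hc i)
  obtain ⟨j₁, hj₁ne, hj₁⟩ : ∃ j, j ≠ i₀ ∧ d j ≠ 0 := by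
    by_contra hc
    push_neg at hc
    have hsum : ∑ i, d i ^ 2 = d i₀ ^ 2 := by
      rw [Finset.sum_eq_single i₀]
      · intro j _ hj; rw [hc j hj, zero_pow]; omega
      · intro h; exact absurd (Finset.mem_univ i₀) h
    rw [hsum] at hiso
    exact hi₀ (by simpa using hiso)
  set v : Fin n → (Fin n → ℂ) := fun j =>
    if j = j₁ then d
    else if j = i₀ then (d i₀)⁻¹ • (Pi.single i₀ 1 : Fin n → ℂ)
    else (Pi.single j 1 : Fin n → ℂ) - (d j / d i₀) • (Pi.single i₀ 1 : Fin n → ℂ)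
    with hv
  set P : Matrix (Fin n) (Fin n) ℂ := Matrix.of (fun i j => v j i) with hPdef
  have hvj₁ : v j₁ = d := by rw [hv]; simp
  have hvi₀ : v i₀ = (d i₀)⁻¹ • (Pi.single i₀ 1 : Fin n → ℂ) := by
    rw [hv]; simp [hj₁ne.symm]
  have hvelse : ∀ j, j ≠ j₁ → j ≠ i₀ →
      v j = (Pi.single j 1 : Fin n → ℂ) - (d j / d i₀) • (Pi.single i₀ 1 : Fin n → ℂ) := by
    intro j h1 h2; rw [hv]; simp [h1, h2]
  -- φ values
  have hphi : ∀ j, ∑ m, d m * v j m = if j = i₀ then 1 else 0 := by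
    intro j
    rcases eq_or_ne j j₁ with rfl | hjj1
    · rw [if_neg hj₁ne, hvj₁]
      calc ∑ m, d m * d m = ∑ m, d m ^ 2 :=
            Finset.sum_congr rfl fun m _ => (sq (d m)).symm
        _ = 0 := hiso
    · rcases eq_or_ne j i₀ with hji0 | hji0
      · rw [if_pos hji0, hji0, hvi₀]
        simp only [Pi.smul_apply, smul_eq_mul]
        have : ∀ m, d m * ((d i₀)⁻¹ * (Pi.single i₀ 1 : Fin n → ℂ) m)
            = ((d i₀)⁻¹ * d m) * (Pi.single i₀ 1 : Fin n → ℂ) m := fun m => by ring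
        rw [Finset.sum_congr rfl fun m _ => this m, single_sum i₀ (fun m => (d i₀)⁻¹ * d m)]
        field_simp
      · rw [if_neg hji0, hvelse j hjj1 hji0]
        have : ∀ m, d m * ((Pi.single j 1 : Fin n → ℂ) m
              - (d j / d i₀) * (Pi.single i₀ 1 : Fin n → ℂ) m)
            = d m * (Pi.single j 1 : Fin n → ℂ) m
              - (d j / d i₀ * d m) * (Pi.single i₀ 1 : Fin n → ℂ) m := fun m => by ring
        simp only [Pi.sub_apply, Pi.smul_apply, smul_eq_mul]
        rw [Finset.sum_congr rfl fun m _ => this m, Finset.sum_sub_distrib,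
          single_sum j d, single_sum i₀ (fun m => d j / d i₀ * d m)]
        field_simp
        ring
  -- invertibility
  have hPunit : IsUnit P := by
    rw [← Matrix.linearIndependent_cols_iff_isUnit]
    have hcols : P.col = v := by
      funext j; funext i; rfl
    rw [hcols, Fintype.linearIndependent_iff]
    intro c hc
    have hcoord : ∀ m, ∑ j, c j * v j m = 0 := by
      intro m
      have h0 := congrFun hc m
      simpa [Finset.sum_apply, Pi.smul_apply, smul_eq_mul] using h0
    have hci₀ : c i₀ = 0 := by
      have h1 : ∑ j, c j * (∑ m, d m * v j m) = 0 := by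
        have e1 : ∀ j : Fin n, c j * (∑ m, d m * v j m) = ∑ m, d m * (c j * v j m) := by
          intro j; rw [Finset.mul_sum]; exact Finset.sum_congr rfl fun m _ => by ring
        rw [Finset.sum_congr rfl fun j _ => e1 j, Finset.sum_comm]
        have e2 : ∀ m : Fin n, ∑ j, d m * (c j * v j m) = d m * ∑ j, c j * v j m := by
          intro m; rw [Finset.mul_sum]
        rw [Finset.sum_congr rfl fun m _ => e2 m]
        simp [hcoord]
      rw [Finset.sum_congr rfl fun j _ => by rw [hphi j]] at h1
      simpa using h1
    have hcj₁ : c j₁ = 0 := by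
      have h2 := hcoord j₁
      rw [Finset.sum_eq_single j₁] at h2
      · rw [hvj₁] at h2
        exact (mul_eq_zero.mp h2).resolve_right hj₁
      · intro j _ hj
        rcases eq_or_ne j i₀ with h | h
        · rw [h, hvi₀]
          simp [Pi.single_eq_of_ne hj₁ne]
        · rw [hvelse j hj h]
          simp [Pi.single_eq_of_ne (Ne.symm hj), Pi.single_eq_of_ne hj₁ne]
      · intro h; exact absurd (Finset.mem_univ j₁) h
    intro j
    rcases eq_or_ne j j₁ with rfl | h1
    · exact hcj₁
    rcases eq_or_ne j i₀ with rfl | h2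
    · exact hci₀
    have h3 := hcoord j
    rw [Finset.sum_eq_single j] at h3
    · rw [hvelse j h1 h2] at h3
      simp only [Pi.sub_apply, Pi.smul_apply, smul_eq_mul, Pi.single_eq_same,
        Pi.single_eq_of_ne h2, mul_zero, sub_zero, mul_one] at h3
      exact h3
    · intro j' _ hj'
      rcases eq_or_ne j' j₁ with rfl | hb1
      · rw [hcj₁, zero_mul]
      rcases eq_or_ne j' i₀ with rfl | hb2
      · rw [hci₀, zero_mul]
      · rw [hvelse j' hb1 hb2]
        simp only [Pi.sub_apply, Pi.smul_apply, smul_eq_mul,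
          Pi.single_eq_of_ne (Ne.symm hj'), Pi.single_eq_of_ne h2,
          mul_zero, sub_zero, mul_zero]
    · intro h; exact absurd (Finset.mem_univ j) h
  have hdet : IsUnit P.det := P.isUnit_iff_isUnit_det.mp hPunit
  have hPP : P * P⁻¹ = 1 := Matrix.mul_nonsing_inv P hdet
  have hPPi : P⁻¹ * P = 1 := Matrix.nonsing_inv_mul P hdet
  set M := P⁻¹ * A * P with hM
  -- column fact
  have hPsingle : P.mulVec (Pi.single j₁ 1) = d := by
    rw [Matrix.mulVec_single_one]
    funext i
    show P i j₁ = d i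
    show v j₁ i = d i
    rw [hvj₁]
  have hMcolv : M.mulVec (Pi.single j₁ 1) = lam • (Pi.single j₁ 1 : Fin n → ℂ) := by
    have hPid : P⁻¹.mulVec d = Pi.single j₁ 1 := by
      rw [← hPsingle, Matrix.mulVec_mulVec, hPPi, Matrix.one_mulVec]
    rw [hM, ← Matrix.mulVec_mulVec, ← Matrix.mulVec_mulVec, hPsingle, hAd,
      Matrix.mulVec_smul, hPid]
  have hMcol : ∀ i, M i j₁ = if i = j₁ then lam else 0 := by
    intro i
    have h5 : Mᵀ j₁ i = (lam • (Pi.single j₁ 1 : Fin n → ℂ)) i := by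
      rw [show Mᵀ j₁ i = M.col j₁ i from rfl, ← Matrix.mulVec_single_one]
      exact congrFun hMcolv i
    rw [show M i j₁ = Mᵀ j₁ i from rfl, h5]
    simp [Pi.single_apply]
  -- row fact
  have hdP : d ᵥ* P = (Pi.single i₀ 1 : Fin n → ℂ) := by
    funext j
    show ∑ m, d m * P m j = (Pi.single i₀ 1 : Fin n → ℂ) j
    have e0 : ∑ m, d m * P m j = ∑ m, d m * v j m := rfl
    rw [e0, hphi j, Pi.single_apply]
  have hMrowv : (Pi.single i₀ 1 : Fin n → ℂ) ᵥ* M = lam • (Pi.single i₀ 1 : Fin n → ℂ) := by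
    have hsPi : (Pi.single i₀ 1 : Fin n → ℂ) ᵥ* P⁻¹ = d := by
      rw [← hdP, Matrix.vecMul_vecMul, hPP, Matrix.vecMul_one]
    have hdA : d ᵥ* A = lam • d := by
      rw [← hA, Matrix.vecMul_transpose, hAd]
    rw [hM, ← Matrix.vecMul_vecMul, ← Matrix.vecMul_vecMul, hsPi, hdA,
      Matrix.smul_vecMul, hdP]
  have hMrow : ∀ j, M i₀ j = if j = i₀ then lam else 0 := by
    intro j
    have h5 : M i₀ j = (lam • (Pi.single i₀ 1 : Fin n → ℂ)) j := by
      rw [show (M i₀ : Fin n → ℂ) = (Pi.single i₀ 1 : Fin n → ℂ) ᵥ* M from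
        (Matrix.single_one_vecMul i₀ M).symm, hMrowv]
    rw [h5]
    simp [Pi.single_apply]
  -- divisibility
  have hdvd : (Polynomial.X - Polynomial.C lam) ^ 2 ∣ M.charpoly := by
    unfold Matrix.charpoly
    rw [Matrix.det_apply]
    apply Finset.dvd_sum
    intro σ _
    rcases eq_or_ne (σ j₁) j₁ with h1 | h1
    · rcases eq_or_ne (σ i₀) i₀ with h2 | h2
      · have hfac1 : charmatrix M (σ j₁) j₁ = Polynomial.X - Polynomial.C lam := by
          rw [h1, charmatrix_apply_eq, hMcol j₁, if_pos rfl]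
        have hfac2 : charmatrix M (σ i₀) i₀ = Polynomial.X - Polynomial.C lam := by
          rw [h2, charmatrix_apply_eq, hMrow i₀, if_pos rfl]
        have hsplit : ∏ i, charmatrix M (σ i) i
            = (∏ i ∈ ({j₁, i₀} : Finset (Fin n)), charmatrix M (σ i) i) *
              ∏ i ∈ Finset.univ \ ({j₁, i₀} : Finset (Fin n)), charmatrix M (σ i) i := by
          rw [mul_comm, Finset.prod_sdiff (Finset.subset_univ _)]
        have hpair : ∏ i ∈ ({j₁, i₀} : Finset (Fin n)), charmatrix M (σ i) i
            = (Polynomial.X - Polynomial.C lam) ^ 2 := by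
          rw [Finset.prod_pair (by exact fun h => hj₁ne h)]
          rw [hfac1, hfac2, sq]
        have : (Polynomial.X - Polynomial.C lam) ^ 2 ∣ ∏ i, charmatrix M (σ i) i := by
          rw [hsplit, hpair]
          exact Dvd.intro _ rfl
        have hz := this
        rcases hz with ⟨t, ht⟩
        rw [ht, Units.smul_def, zsmul_eq_mul]
        exact Dvd.dvd.mul_left (Dvd.intro t rfl) _
      · have hne : σ.symm i₀ ≠ i₀ := fun h => h2 ((Equiv.symm_apply_eq σ).mp h).symm
        have hzero : charmatrix M (σ (σ.symm i₀)) (σ.symm i₀) = 0 := by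
          rw [Equiv.apply_symm_apply, charmatrix_apply_ne _ _ _ (Ne.symm hne), hMrow,
            if_neg hne, map_zero, neg_zero]
        have hp : ∏ i, charmatrix M (σ i) i = 0 :=
          Finset.prod_eq_zero (Finset.mem_univ (σ.symm i₀)) hzero
        rw [hp, smul_zero]
        exact dvd_zero _
    · have hzero : charmatrix M (σ j₁) j₁ = 0 := by
        rw [charmatrix_apply_ne _ _ _ h1, hMcol, if_neg h1, map_zero, neg_zero]
      have hp : ∏ i, charmatrix M (σ i) i = 0 :=
        Finset.prod_eq_zero (Finset.mem_univ j₁) hzero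
      rw [hp, smul_zero]
      exact dvd_zero _
  have hconj : M.charpoly = A.charpoly := charpoly_conj' P A hdet
  rw [hconj] at hdvd
  exact (Polynomial.le_rootMultiplicity_iff (Matrix.charpoly_monic A).ne_zero).mpr hdvd

/-- At an isotropic Darboux point `d` (i.e. `d ≠ 0`, `d₁² + ⋯ + dₙ² = 0`) of a homogeneous
potential `V` of degree `k`, the eigenvalue of the Hessian `V''(d)` corresponding to the
eigenvector `d` — namely `k-1` in the normalized proper case `V'(d) = d`, and `0` in the
improper case `V'(d) = 0` — is a root of the characteristic polynomial of `V''(d)` of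
algebraic multiplicity at least two. -/
theorem stmt2 {n k : ℕ} (V : MvPolynomial (Fin n) ℂ) (hV : V.IsHomogeneous k)
    (d : Fin n → ℂ) (hd : d ≠ 0) (hiso : ∑ i, d i ^ 2 = 0) :
    (grad V d = d →
      2 ≤ Polynomial.rootMultiplicity ((k : ℂ) - 1) (Matrix.charpoly (hess V d))) ∧
    (grad V d = 0 →
      2 ≤ Polynomial.rootMultiplicity (0 : ℂ) (Matrix.charpoly (hess V d))) := by
  have hmul := hess_mulVec V hV d
  constructor
  · intro h
    rw [h] at hmul
    exact key_lemma (hess V d) (hess_symm V d) d hd hiso _ hmul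
  · intro h
    rw [h, smul_zero] at hmul
    exact key_lemma (hess V d) (hess_symm V d) d hd hiso 0 (by rw [hmul, zero_smul])
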